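/- arXiv:2511.01605 — 3 statements merged into one kernel-verified Lean document; each statement's English description precedes it below -/
import Mathlib

section
/- Let P, K be positive integers, let v_1, …, v_K ∈ ℂ^P, and let a ∈ ℝ^K be such that the true covariance C = Σ_{k=1}^K a_k v_k v_k^H is Hermitian positive definite. Let â ∈ ℝ^K be such that Ĉ = Σ_{k=1}^K â_k v_k v_k^H is Hermitian positive definite and â is a stationary point of the population negative log-likelihood, i.e. v_k^H Ĉ^{-1} (Ĉ − C) Ĉ^{-1} v_k = 0 for every k = 1, …, K. Then Ĉ = C. -/
open Matrix
open scoped ComplexOrder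

/-- The rank-one Hermitian matrix `v vᴴ` formed from a vector `v ∈ ℂ^P`. -/
noncomputable def outer {P : ℕ} (v : Fin P → ℂ) : Matrix (Fin P) (Fin P) ℂ :=
  Matrix.of fun p q => v p * star (v q)

lemma eq_zero_of_trace_conjTranspose_mul_self_eq_zero {P : ℕ}
    {N : Matrix (Fin P) (Fin P) ℂ} (h : (Nᴴ * N).trace = 0) : N = 0 := by
  have h1 : ∀ i, star (fun j => N j i) ⬝ᵥ (fun j => N j i) = 0 := by
    have hs : ∑ i, star (fun j => N j i) ⬝ᵥ (fun j => N j i) = 0 := by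
      rw [← h]; simp [Matrix.trace, Matrix.diag, Matrix.mul_apply, dotProduct, mul_comm]
    intro i
    exact congrFun ((Fintype.sum_eq_zero_iff_of_nonneg
      (fun i => dotProduct_star_self_nonneg _)).mp hs) i
  ext i j
  have := dotProduct_star_self_eq_zero.mp (h1 j)
  simpa using congrFun this i

lemma trace_mul_outer {P : ℕ} (D : Matrix (Fin P) (Fin P) ℂ) (v : Fin P → ℂ) :
    (D * outer v).trace = star v ⬝ᵥ (D *ᵥ v) := by
  simp only [Matrix.trace, Matrix.diag, Matrix.mul_apply, dotProduct, Matrix.mulVec, outer,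
    Matrix.of_apply, Finset.mul_sum, Pi.star_apply, RCLike.star_def]
  congr 1; ext p; congr 1; ext q; ring

/-- In the population setting `S = C`, any stationary point of the
negative log-likelihood with fixed frequencies recovers the true covariance. -/
theorem stmt_0 (P K : ℕ) (hP : 0 < P) (hK : 0 < K)
    (v : Fin K → Fin P → ℂ) (a : Fin K → ℝ)
    (C : Matrix (Fin P) (Fin P) ℂ)
    (hCdef : C = ∑ k, (a k : ℂ) • outer (v k))
    (hCpd : C.PosDef)
    (ahat : Fin K → ℝ)
    (Chat : Matrix (Fin P) (Fin P) ℂ)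
    (hChatdef : Chat = ∑ k, (ahat k : ℂ) • outer (v k))
    (hChatpd : Chat.PosDef)
    (hstat : ∀ k, star (v k) ⬝ᵥ ((Chat⁻¹ * (Chat - C) * Chat⁻¹) *ᵥ v k) = 0) :
    Chat = C := by
  set M : Matrix (Fin P) (Fin P) ℂ := Chat - C with hMdef
  set B : Matrix (Fin P) (Fin P) ℂ := Chat⁻¹ with hBdef
  have hB : B.PosDef := hChatpd.inv
  have hMH : M.IsHermitian := hChatpd.1.sub hCpd.1
  set D : Matrix (Fin P) (Fin P) ℂ := B * M * B with hDdef
  -- M as a sum of outers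
  have hMsum : M = ∑ k, (((ahat k : ℂ) - (a k : ℂ)) • outer (v k)) := by
    rw [hMdef, hChatdef, hCdef, ← Finset.sum_sub_distrib]
    congr 1; ext k; rw [sub_smul]
  -- trace (D * M) = 0
  have htr : (D * M).trace = 0 := by
    rw [hMsum, Finset.mul_sum, trace_sum]
    refine Finset.sum_eq_zero fun k _ => ?_
    rw [Matrix.mul_smul, trace_smul, trace_mul_outer]
    rw [hstat k]
    simp
  -- factor B = Sᴴ * S
  obtain ⟨S, hSfac'⟩ : ∃ S : Matrix (Fin P) (Fin P) ℂ, B = star S * S := by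
    open scoped MatrixOrder Matrix.Norms.L2Operator in
    exact CStarAlgebra.nonneg_iff_eq_star_mul_self.mp hB.posSemidef.nonneg
  have hSfac : B = Sᴴ * S := hSfac'
  set N : Matrix (Fin P) (Fin P) ℂ := S * M * Sᴴ with hNdef
  have hNH : Nᴴ = N := by
    rw [hNdef, conjTranspose_mul, conjTranspose_mul, conjTranspose_conjTranspose, hMH.eq,
      Matrix.mul_assoc]
  have htrN : (Nᴴ * N).trace = 0 := by
    rw [hNH]
    have e1 : N * N = S * (M * (Sᴴ * S) * (M * Sᴴ)) := by
      rw [hNdef]; simp only [Matrix.mul_assoc]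
    have e2 : (N * N).trace = (M * (B * (M * B))).trace := by
      rw [e1, ← hSfac, trace_mul_comm]
      simp only [Matrix.mul_assoc]
      rw [hSfac]
    have e3 : (D * M).trace = (M * (B * (M * B))).trace := by
      rw [hDdef, trace_mul_comm]
      simp only [Matrix.mul_assoc]
    rw [e2, ← e3, htr]
  have hN0 : N = 0 := eq_zero_of_trace_conjTranspose_mul_self_eq_zero htrN
  have hdetS : S.det ≠ 0 ∧ Sᴴ.det ≠ 0 := by
    have hdB : B.det ≠ 0 := ne_of_gt hB.det_pos
    rw [hSfac, det_mul] at hdB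
    exact ⟨right_ne_zero_of_mul hdB, left_ne_zero_of_mul hdB⟩
  have hM0 : M = 0 := by
    have : S⁻¹ * (S * M * Sᴴ) * (Sᴴ)⁻¹ = M := by
      rw [Matrix.mul_assoc S M Sᴴ, ← Matrix.mul_assoc S⁻¹, Matrix.nonsing_inv_mul S (isUnit_iff_ne_zero.mpr hdetS.1),
        Matrix.one_mul, Matrix.mul_assoc, Matrix.mul_nonsing_inv Sᴴ (isUnit_iff_ne_zero.mpr hdetS.2), Matrix.mul_one]
    rw [← this, ← hNdef, hN0]
    simp
  exact sub_eq_zero.mp hM0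
end

section
/- Let P, K be positive integers, let v_1, …, v_K ∈ ℂ^P, let C be a P×P Hermitian positive definite complex matrix, let Δ be a P×P Hermitian matrix, and let Γ be a Hermitian matrix lying in the real span of {v_k v_k^H : k = 1, …, K}. If v_k^H C^{-1} (Γ − Δ) C^{-1} v_k = 0 for every k = 1, …, K, then ‖C^{-1/2} Γ C^{-1/2}‖_F ≤ ‖C^{-1/2} Δ C^{-1/2}‖_F. -/
open Matrix
open scoped ComplexOrder

/-- The Frobenius norm `‖X‖_F = (Σ_{p,q} |X_{pq}|²)^{1/2}`. -/
noncomputable def frobNorm {P : ℕ} (X : Matrix (Fin P) (Fin P) ℂ) : ℝ :=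
  Real.sqrt (∑ p, ∑ q, ‖X p q‖ ^ 2)

noncomputable def Matrix.PosSemidef.sqrt {n 𝕜 : Type*} [Fintype n] [RCLike 𝕜] [DecidableEq n]
    {A : Matrix n n 𝕜} (hA : A.PosSemidef) : Matrix n n 𝕜 :=
  hA.isHermitian.eigenvectorUnitary.1 * diagonal ((↑) ∘ (√·) ∘ hA.isHermitian.eigenvalues) *
    (star hA.isHermitian.eigenvectorUnitary : Matrix n n 𝕜)

lemma stmt3_sqrt_isHermitian {P : ℕ} {C : Matrix (Fin P) (Fin P) ℂ} (h : C.PosSemidef) :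
    h.sqrt.IsHermitian := by
  unfold Matrix.PosSemidef.sqrt
  have hd : (diagonal (((↑) : ℝ → ℂ) ∘ (√·) ∘ h.isHermitian.eigenvalues)).IsHermitian := by
    apply isHermitian_diagonal_of_self_adjoint
    ext i
    simp
  have := isHermitian_mul_mul_conjTranspose (h.isHermitian.eigenvectorUnitary : Matrix (Fin P) (Fin P) ℂ) hd
  simpa [Matrix.star_eq_conjTranspose] using this

lemma stmt3_sqrt_mul_self {P : ℕ} {C : Matrix (Fin P) (Fin P) ℂ} (h : C.PosSemidef) :
    h.sqrt * h.sqrt = C := by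
  unfold Matrix.PosSemidef.sqrt
  conv_rhs => rw [h.isHermitian.spectral_theorem]
  rw [Unitary.conjStarAlgAut_apply]
  set U : Matrix (Fin P) (Fin P) ℂ := h.isHermitian.eigenvectorUnitary.1
  have hU : (star h.isHermitian.eigenvectorUnitary : Matrix (Fin P) (Fin P) ℂ) * U = 1 :=
    Unitary.coe_star_mul_self _
  calc U * diagonal (((↑) : ℝ → ℂ) ∘ (√·) ∘ h.isHermitian.eigenvalues) * (star h.isHermitian.eigenvectorUnitary : Matrix (Fin P) (Fin P) ℂ) *
      (U * diagonal (((↑) : ℝ → ℂ) ∘ (√·) ∘ h.isHermitian.eigenvalues) * (star h.isHermitian.eigenvectorUnitary : Matrix (Fin P) (Fin P) ℂ))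
      = U * (diagonal (((↑) : ℝ → ℂ) ∘ (√·) ∘ h.isHermitian.eigenvalues) * ((star h.isHermitian.eigenvectorUnitary : Matrix (Fin P) (Fin P) ℂ) * U) * diagonal (((↑) : ℝ → ℂ) ∘ (√·) ∘ h.isHermitian.eigenvalues)) * (star h.isHermitian.eigenvectorUnitary : Matrix (Fin P) (Fin P) ℂ) := by
        simp only [Matrix.mul_assoc]
    _ = _ := by
        rw [hU, Matrix.mul_one, diagonal_mul_diagonal]
        congr 3
        ext i
        simp only [Function.comp_apply]
        rw [← Complex.ofReal_mul, Real.mul_self_sqrt (h.eigenvalues_nonneg i)]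
        rfl

lemma trace_outer_mul {P : ℕ} (u : Fin P → ℂ) (M : Matrix (Fin P) (Fin P) ℂ) :
    ((outer u * M).trace) = star u ⬝ᵥ (M *ᵥ u) := by
  simp only [Matrix.trace, Matrix.diag, Matrix.mul_apply, outer, Matrix.of_apply,
    dotProduct, Matrix.mulVec, Pi.star_apply, Finset.mul_sum]
  rw [Finset.sum_comm]
  congr 1; ext q; congr 1; ext p; ring

lemma trace_self_mul_re {P : ℕ} (X : Matrix (Fin P) (Fin P) ℂ) (hX : X.IsHermitian) :
    ((X * X).trace).re = ∑ p, ∑ q, ‖X p q‖ ^ 2 := by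
  simp only [Matrix.trace, Matrix.diag, Matrix.mul_apply, Complex.re_sum]
  congr 1; ext p; congr 1; ext q
  rw [show X q p = star (X p q) from by rw [← hX.apply]]
  simp [Complex.mul_conj, Complex.sq_norm]

lemma trace_mul_re_le {P : ℕ} (X Y : Matrix (Fin P) (Fin P) ℂ) (hY : Y.IsHermitian) :
    ((X * Y).trace).re ≤ ∑ p, ∑ q, ‖X p q‖ * ‖Y p q‖ := by
  simp only [Matrix.trace, Matrix.diag, Matrix.mul_apply, Complex.re_sum]
  apply Finset.sum_le_sum; intro p _
  apply Finset.sum_le_sum; intro q _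
  calc (X p q * Y q p).re ≤ ‖X p q * Y q p‖ := Complex.re_le_norm _
    _ = ‖X p q‖ * ‖Y p q‖ := by
        rw [norm_mul]
        congr 1
        rw [show Y q p = star (Y p q) by rw [← hY.apply]]
        simp

/-- If `Γ` is Hermitian, lies in the real span of `{v_k v_kᴴ}`, and
`v_kᴴ C⁻¹ (Γ − Δ) C⁻¹ v_k = 0` for all `k`, then
`‖C^{-1/2} Γ C^{-1/2}‖_F ≤ ‖C^{-1/2} Δ C^{-1/2}‖_F`. -/
theorem stmt_3 (P K : ℕ) (hP : 0 < P) (hK : 0 < K)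
    (v : Fin K → Fin P → ℂ)
    (C : Matrix (Fin P) (Fin P) ℂ) (hCpd : C.PosDef)
    (Δ : Matrix (Fin P) (Fin P) ℂ) (hΔherm : Δ.IsHermitian)
    (Γ : Matrix (Fin P) (Fin P) ℂ) (hΓherm : Γ.IsHermitian)
    (hΓspan : ∃ c : Fin K → ℝ, Γ = ∑ k, (c k : ℂ) • outer (v k))
    (horth : ∀ k, star (v k) ⬝ᵥ ((C⁻¹ * (Γ - Δ) * C⁻¹) *ᵥ v k) = 0) :
    frobNorm ((hCpd.posSemidef.sqrt)⁻¹ * Γ * (hCpd.posSemidef.sqrt)⁻¹) ≤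
      frobNorm ((hCpd.posSemidef.sqrt)⁻¹ * Δ * (hCpd.posSemidef.sqrt)⁻¹) := by
  set S : Matrix (Fin P) (Fin P) ℂ := (hCpd.posSemidef.sqrt)⁻¹ with hSdef
  have hSherm : S.IsHermitian := (stmt3_sqrt_isHermitian hCpd.posSemidef).inv
  have hSS : S * S = C⁻¹ := by
    rw [hSdef, ← Matrix.mul_inv_rev, stmt3_sqrt_mul_self hCpd.posSemidef]
  set A := S * Γ * S with hA
  set B := S * Δ * S with hB
  have hAherm : A.IsHermitian := by
    have := Matrix.isHermitian_conjTranspose_mul_mul S hΓherm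
    rwa [hSherm.eq] at this
  have hBherm : B.IsHermitian := by
    have := Matrix.isHermitian_conjTranspose_mul_mul S hΔherm
    rwa [hSherm.eq] at this
  -- key trace identity
  have hkey : (A * (A - B)).trace = 0 := by
    have h1 : A - B = S * (Γ - Δ) * S := by rw [hA, hB]; noncomm_ring
    obtain ⟨c, hc⟩ := hΓspan
    have h2 : (A * (A - B)).trace = (Γ * (C⁻¹ * (Γ - Δ) * C⁻¹)).trace := by
      rw [h1, hA]
      have e1 : S * Γ * S * (S * (Γ - Δ) * S) = S * (Γ * (S * S) * (Γ - Δ) * S) := by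
        noncomm_ring
      rw [e1, Matrix.trace_mul_comm]
      have e2 : Γ * (S * S) * (Γ - Δ) * S * S = Γ * ((S * S) * (Γ - Δ) * (S * S)) := by
        noncomm_ring
      rw [e2, hSS]
    rw [h2]
    nth_rewrite 1 [hc]
    rw [Finset.sum_mul, Matrix.trace_sum]
    rw [Finset.sum_eq_zero]
    intro k _
    rw [Matrix.smul_mul, Matrix.trace_smul, trace_outer_mul, horth k, smul_zero]
  -- pass to real parts
  set N := C⁻¹ * (Γ - Δ) * C⁻¹
  have hkey' : ((A * A).trace).re = ((A * B).trace).re := by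
    have : (A * (A - B)).trace = (A * A).trace - (A * B).trace := by
      rw [Matrix.mul_sub, Matrix.trace_sub]
    rw [this] at hkey
    have := sub_eq_zero.mp hkey
    rw [this]
  set SA := ∑ p, ∑ q, ‖A p q‖ ^ 2 with hSA
  set SB := ∑ p, ∑ q, ‖B p q‖ ^ 2 with hSB
  have hSAnn : 0 ≤ SA := Finset.sum_nonneg fun _ _ => Finset.sum_nonneg fun _ _ => by positivity
  have hSBnn : 0 ≤ SB := Finset.sum_nonneg fun _ _ => Finset.sum_nonneg fun _ _ => by positivity
  have hmain : SA ≤ Real.sqrt SA * Real.sqrt SB := by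
    calc SA = ((A * A).trace).re := (trace_self_mul_re A hAherm).symm
      _ = ((A * B).trace).re := hkey'
      _ ≤ ∑ p, ∑ q, ‖A p q‖ * ‖B p q‖ := trace_mul_re_le A B hBherm
      _ ≤ Real.sqrt SA * Real.sqrt SB := by
          rw [hSA, hSB, ← Finset.sum_product' (f := fun p q => ‖A p q‖ * ‖B p q‖),
            ← Finset.sum_product' (f := fun p q => ‖A p q‖ ^ 2),
            ← Finset.sum_product' (f := fun p q => ‖B p q‖ ^ 2)]
          exact Real.sum_mul_le_sqrt_mul_sqrt _ _ _
  show Real.sqrt SA ≤ Real.sqrt SB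
  rcases eq_or_lt_of_le (Real.sqrt_nonneg SA) with h0 | h0
  · rw [← h0]; exact Real.sqrt_nonneg SB
  · have : Real.sqrt SA * Real.sqrt SA ≤ Real.sqrt SA * Real.sqrt SB := by
      rwa [Real.mul_self_sqrt hSAnn]
    exact le_of_mul_le_mul_left this h0
end

section
/- Let P, K be positive integers, ε > 0, ω ∈ ℝ^K, S a P×P Hermitian positive semidefinite complex matrix, and define L(a) = tr(S Ĉ(a)^{-1}) + log det Ĉ(a) where Ĉ(a) = Σ_{k=1}^K s(a_k) v(ω_k) v(ω_k)^H + ε I. Then for each k, the partial derivative of L with respect to a_k at a equals s'(a_k) · v(ω_k)^H E v(ω_k), where E = Ĉ(a)^{-1}(Ĉ(a) − S)Ĉ(a)^{-1} and s'(a) = e^a/(1+e^a) is the sigmoid function. -/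
open Matrix
open scoped ComplexOrder

/-- The steering vector `v(ω) ∈ ℂ^P`, `v(ω)_p = e^{iωp}` for `p = 0, …, P−1`. -/
noncomputable def steer (P : ℕ) (ω : ℝ) : Fin P → ℂ :=
  fun p => Complex.exp (Complex.I * (ω : ℂ) * ((p : ℕ) : ℂ))

/-- The softplus function `s(a) = log(1 + e^a)`. -/
noncomputable def softplus (x : ℝ) : ℝ := Real.log (1 + Real.exp x)

/-- The sigmoid function `s'(a) = e^a / (1 + e^a)`, the derivative of softplus. -/
noncomputable def sigmoid (x : ℝ) : ℝ := Real.exp x / (1 + Real.exp x)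

/-- The parameterized covariance `Ĉ(a) = Σ_k s(a_k) v(ω_k) v(ω_k)ᴴ + ε I`. -/
noncomputable def Chat (P K : ℕ) (ε : ℝ) (ω a : Fin K → ℝ) :
    Matrix (Fin P) (Fin P) ℂ :=
  ∑ k, (softplus (a k) : ℂ) • outer (steer P (ω k)) + (ε : ℂ) • 1

/-- The negative log-likelihood `L(a) = tr(S Ĉ(a)⁻¹) + log det Ĉ(a)` (real valued,
since `Ĉ(a)` is Hermitian positive definite and `S` is Hermitian). -/
noncomputable def nll (P K : ℕ) (ε : ℝ) (ω : Fin K → ℝ) (S : Matrix (Fin P) (Fin P) ℂ)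
    (a : Fin K → ℝ) : ℝ :=
  (Matrix.trace (S * (Chat P K ε ω a)⁻¹)).re + Real.log ((Chat P K ε ω a).det).re

/- ### Auxiliary lemmas -/

lemma aux_hasDerivAt_re {f : ℝ → ℂ} {f' : ℂ} {x : ℝ} (h : HasDerivAt f f' x) :
    HasDerivAt (fun t => (f t).re) f'.re x := by
  exact (Complex.reCLM.hasFDerivAt (x := f x)).comp_hasDerivAt x h

lemma aux_softplus_hasDerivAt (t : ℝ) : HasDerivAt softplus (sigmoid t) t := by
  have h : HasDerivAt (fun x : ℝ => 1 + Real.exp x) (Real.exp t) t :=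
    (Real.hasDerivAt_exp t).const_add 1
  have hpos : (0:ℝ) < 1 + Real.exp t := by positivity
  exact h.log hpos.ne'

lemma aux_outer_psd {P : ℕ} (v : Fin P → ℂ) : (outer v).PosSemidef := by
  have h : outer v = Matrix.replicateCol Unit v * (Matrix.replicateCol Unit v)ᴴ := by
    ext p q
    simp [outer, Matrix.mul_apply, Matrix.conjTranspose_apply]
  rw [h]
  exact Matrix.posSemidef_self_mul_conjTranspose _

lemma aux_smul_psd {P : ℕ} (c : ℝ) (hc : 0 ≤ c) (M : Matrix (Fin P) (Fin P) ℂ)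
    (hM : M.PosSemidef) : ((c:ℂ) • M).PosSemidef := by
  refine Matrix.PosSemidef.of_dotProduct_mulVec_nonneg ?_ (fun x => ?_)
  · have := hM.1
    unfold Matrix.IsHermitian at *
    rw [Matrix.conjTranspose_smul, this]
    simp [Complex.star_def, Complex.conj_ofReal]
  · rw [Matrix.smul_mulVec, dotProduct_smul, smul_eq_mul]
    exact mul_nonneg (by exact_mod_cast hc) (hM.dotProduct_mulVec_nonneg x)

lemma aux_softplus_nonneg (x : ℝ) : 0 ≤ softplus x :=
  Real.log_nonneg (by nlinarith [Real.exp_pos x])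

lemma aux_chat_posDef (P K : ℕ) (ε : ℝ) (hε : 0 < ε) (ω b : Fin K → ℝ) :
    (Chat P K ε ω b).PosDef := by
  unfold Chat
  refine Matrix.PosDef.posSemidef_add ?_ ?_
  · refine Finset.sum_induction _ Matrix.PosSemidef
      (fun A B hA hB => hA.add hB) Matrix.PosSemidef.zero ?_
    intro j _
    exact aux_smul_psd _ (aux_softplus_nonneg _) _ (aux_outer_psd _)
  · refine Matrix.PosDef.of_dotProduct_mulVec_pos ?_ (fun x hx => ?_)
    · unfold Matrix.IsHermitian
      rw [Matrix.conjTranspose_smul, Matrix.conjTranspose_one]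
      simp [Complex.star_def, Complex.conj_ofReal]
    · rw [Matrix.smul_mulVec, Matrix.one_mulVec, dotProduct_smul, smul_eq_mul]
      exact mul_pos (by exact_mod_cast hε) (dotProduct_star_self_pos_iff.mpr hx)

lemma aux_trace_mul_outer {P : ℕ} (A : Matrix (Fin P) (Fin P) ℂ) (v : Fin P → ℂ) :
    Matrix.trace (A * outer v) = star v ⬝ᵥ (A *ᵥ v) := by
  simp only [Matrix.trace, Matrix.diag_apply, Matrix.mul_apply, outer, Matrix.of_apply,
    dotProduct, Matrix.mulVec, Pi.star_apply, Finset.mul_sum]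
  exact Finset.sum_congr rfl fun p _ => Finset.sum_congr rfl fun q _ => by ring

lemma aux_outer_sandwich {P : ℕ} (M : Matrix (Fin P) (Fin P) ℂ) (v : Fin P → ℂ) :
    outer v * M * outer v = (star v ⬝ᵥ (M *ᵥ v)) • outer v := by
  ext p s
  simp only [Matrix.mul_apply, outer, Matrix.of_apply, Matrix.smul_apply, smul_eq_mul,
    dotProduct, Matrix.mulVec, Pi.star_apply, Finset.mul_sum, Finset.sum_mul]
  rw [Finset.sum_comm]
  exact Finset.sum_congr rfl fun r _ => Finset.sum_congr rfl fun t _ => by ring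

lemma aux_det_add {P : ℕ} (C : Matrix (Fin P) (Fin P) ℂ) (hC : IsUnit C.det)
    (v : Fin P → ℂ) (c : ℂ) :
    (C + c • outer v).det = C.det * (1 + c * (star v ⬝ᵥ (C⁻¹ *ᵥ v))) := by
  have h : c • outer v = Matrix.replicateCol Unit (c • v) * Matrix.replicateRow Unit (star v) := by
    ext p q
    simp only [Matrix.smul_apply, outer, Matrix.of_apply, Matrix.mul_apply, Matrix.replicateCol_apply,
      Matrix.replicateRow_apply, Pi.smul_apply, Pi.star_apply, smul_eq_mul, Finset.univ_unique,
      Finset.sum_singleton]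
    ring
  rw [h, Matrix.det_add_replicateCol_mul_replicateRow hC]
  congr 1
  rw [Matrix.mul_assoc, ← Matrix.replicateCol_mulVec, Matrix.det_unique, Matrix.add_apply,
    Matrix.one_apply_eq, Matrix.replicateRow_mul_replicateCol_apply, Matrix.mulVec_smul, dotProduct_smul,
    smul_eq_mul]

lemma aux_inv_add {P : ℕ} (C : Matrix (Fin P) (Fin P) ℂ) (hC : IsUnit C.det)
    (v : Fin P → ℂ) (c : ℂ) (hc : 1 + c * (star v ⬝ᵥ (C⁻¹ *ᵥ v)) ≠ 0) :
    (C + c • outer v)⁻¹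
      = C⁻¹ - (c / (1 + c * (star v ⬝ᵥ (C⁻¹ *ᵥ v)))) • (C⁻¹ * outer v * C⁻¹) := by
  set q : ℂ := star v ⬝ᵥ (C⁻¹ *ᵥ v) with hq
  set d : ℂ := c / (1 + c * q) with hd
  apply Matrix.inv_eq_right_inv
  have hCC : C * C⁻¹ = 1 := Matrix.mul_nonsing_inv C hC
  have e1 : C * (C⁻¹ * outer v * C⁻¹) = outer v * C⁻¹ := by
    rw [← Matrix.mul_assoc, ← Matrix.mul_assoc, hCC, Matrix.one_mul]
  have e2 : outer v * (C⁻¹ * outer v * C⁻¹) = q • (outer v * C⁻¹) := by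
    calc outer v * (C⁻¹ * outer v * C⁻¹) = (outer v * C⁻¹ * outer v) * C⁻¹ := by
          rw [Matrix.mul_assoc, Matrix.mul_assoc, Matrix.mul_assoc]
      _ = (q • outer v) * C⁻¹ := by rw [aux_outer_sandwich]
      _ = q • (outer v * C⁻¹) := Matrix.smul_mul q _ _
  have hzero : c - d - c * (d * q) = 0 := by
    rw [hd]
    field_simp
    ring
  calc (C + c • outer v) * (C⁻¹ - d • (C⁻¹ * outer v * C⁻¹))
      = C * C⁻¹ - d • (C * (C⁻¹ * outer v * C⁻¹)) + (c • (outer v * C⁻¹)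
          - (c * (d * q)) • (outer v * C⁻¹)) := by
        simp only [Matrix.add_mul, Matrix.mul_sub, Matrix.smul_mul, Matrix.mul_smul]
        rw [e2]
        simp only [smul_smul]
        module
    _ = 1 + (c - d - c * (d * q)) • (outer v * C⁻¹) := by rw [hCC, e1]; module
    _ = 1 := by rw [hzero, zero_smul, add_zero]

lemma aux_chat_update (P K : ℕ) (ε : ℝ) (ω a : Fin K → ℝ) (k : Fin K) (t : ℝ) :
    Chat P K ε ω (Function.update a k t)
      = Chat P K ε ω a + ((softplus t - softplus (a k) : ℝ) : ℂ) • outer (steer P (ω k)) := by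
  unfold Chat
  have h1 : ∀ j, (softplus (Function.update a k t j) : ℂ) • outer (steer P (ω j))
      = (softplus (a j) : ℂ) • outer (steer P (ω j))
        + (if j = k then ((softplus t - softplus (a k) : ℝ) : ℂ) • outer (steer P (ω k))
           else 0) := by
    intro j
    by_cases h : j = k
    · subst h
      rw [Function.update_self, if_pos rfl, ← add_smul]
      congr 1
      push_cast
      ring
    · rw [Function.update_of_ne h, if_neg h, add_zero]
  rw [Finset.sum_congr rfl (fun j _ => h1 j), Finset.sum_add_distrib,
    Finset.sum_ite_eq' Finset.univ k, if_pos (Finset.mem_univ k)]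
  abel

/-- The partial derivative of `L` with respect to `a_k` equals
`s'(a_k) · v(ω_k)ᴴ E v(ω_k)` with `E = Ĉ⁻¹ (Ĉ − S) Ĉ⁻¹`. -/
theorem stmt_9 (P K : ℕ) (hP : 0 < P) (hK : 0 < K) (ε : ℝ) (hε : 0 < ε)
    (ω : Fin K → ℝ) (S : Matrix (Fin P) (Fin P) ℂ) (hS : S.PosSemidef)
    (a : Fin K → ℝ) (k : Fin K) :
    HasDerivAt (fun t => nll P K ε ω S (Function.update a k t))
      (sigmoid (a k) *
        (star (steer P (ω k)) ⬝ᵥ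
          (((Chat P K ε ω a)⁻¹ * (Chat P K ε ω a - S) * (Chat P K ε ω a)⁻¹) *ᵥ
            steer P (ω k))).re)
      (a k) := by
  classical
  have hv0 : steer P (ω k) ≠ 0 := by
    intro h
    have := congrFun h ⟨0, hP⟩
    simp [steer] at this
  have hCpd : (Chat P K ε ω a).PosDef := aux_chat_posDef P K ε hε ω a
  have hdet : IsUnit (Chat P K ε ω a).det := hCpd.det_pos.ne'.isUnit
  set C : Matrix (Fin P) (Fin P) ℂ := Chat P K ε ω a with hCdef
  set v : Fin P → ℂ := steer P (ω k) with hvdef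
  set q : ℂ := star v ⬝ᵥ (C⁻¹ *ᵥ v) with hqdef
  have hqpos : 0 < q := hCpd.inv.dotProduct_mulVec_pos hv0
  have hq_im : q.im = 0 := by
    have := (Complex.lt_def.mp hqpos).2
    simpa using this.symm
  have hq_eq : ((q.re : ℝ) : ℂ) = q := Complex.ext (by simp) (by simp [hq_im])
  have hdpos : 0 < C.det := hCpd.det_pos
  have hd_im : C.det.im = 0 := by
    have := (Complex.lt_def.mp hdpos).2
    simpa using this.symm
  have hd_eq : ((C.det.re : ℝ) : ℂ) = C.det := Complex.ext (by simp) (by simp [hd_im])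
  have hd_re_pos : 0 < C.det.re := by
    have := (Complex.lt_def.mp hdpos).1
    simpa using this
  have hsp : HasDerivAt softplus (sigmoid (a k)) (a k) := aux_softplus_hasDerivAt _
  -- the log-det part
  have heqdet : ∀ t : ℝ, ((Chat P K ε ω (Function.update a k t)).det).re
      = C.det.re * (1 + (softplus t - softplus (a k)) * q.re) := by
    intro t
    rw [aux_chat_update, ← hCdef, ← hvdef, aux_det_add C hdet v _, ← hqdef, ← hq_eq, ← hd_eq]
    have : ((C.det.re : ℝ) : ℂ) * (1 + ((softplus t - softplus (a k) : ℝ) : ℂ) * ((q.re : ℝ) : ℂ))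
        = ((C.det.re * (1 + (softplus t - softplus (a k)) * q.re) : ℝ) : ℂ) := by
      push_cast
      ring
    rw [this, Complex.ofReal_re]
    simp
  have hinner : HasDerivAt (fun t : ℝ => C.det.re * (1 + (softplus t - softplus (a k)) * q.re))
      (C.det.re * (sigmoid (a k) * q.re)) (a k) := by
    simpa using (((hsp.sub_const (softplus (a k))).mul_const q.re).const_add 1).const_mul C.det.re
  have H2 : HasDerivAt (fun t : ℝ => Real.log ((Chat P K ε ω (Function.update a k t)).det).re)
      (sigmoid (a k) * q.re) (a k) := by
    have hne : C.det.re * (1 + (softplus (a k) - softplus (a k)) * q.re) ≠ 0 := by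
      simp [hd_re_pos.ne']
    have hlog := hinner.log hne
    have hfun : (fun t : ℝ => Real.log ((Chat P K ε ω (Function.update a k t)).det).re)
        = fun t => Real.log (C.det.re * (1 + (softplus t - softplus (a k)) * q.re)) :=
      funext fun t => by rw [heqdet t]
    rw [hfun]
    convert hlog using 1
    rw [sub_self, zero_mul, add_zero, mul_one]
    exact (mul_div_cancel_left₀ _ hd_re_pos.ne').symm
  -- the trace part
  set T0 : ℂ := Matrix.trace (S * C⁻¹) with hT0
  set r : ℂ := Matrix.trace (S * (C⁻¹ * outer v * C⁻¹)) with hrdef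
  have hh : HasDerivAt (fun t : ℝ => ((softplus t - softplus (a k) : ℝ) : ℂ))
      ((sigmoid (a k) : ℝ) : ℂ) (a k) := (hsp.sub_const _).ofReal_comp
  have hden : HasDerivAt (fun t : ℝ => 1 + ((softplus t - softplus (a k) : ℝ) : ℂ) * q)
      (((sigmoid (a k) : ℝ) : ℂ) * q) (a k) := by
    simpa using (hh.mul_const q).const_add 1
  have hden0 : (1 : ℂ) + ((softplus (a k) - softplus (a k) : ℝ) : ℂ) * q ≠ 0 := by simp
  have hquot : HasDerivAt
      (fun t : ℝ => ((softplus t - softplus (a k) : ℝ) : ℂ)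
        / (1 + ((softplus t - softplus (a k) : ℝ) : ℂ) * q))
      ((sigmoid (a k) : ℝ) : ℂ) (a k) := by
    have := hh.div hden hden0
    simpa [Pi.div_def] using this
  have hφ : HasDerivAt (fun t : ℝ => (T0 - (((softplus t - softplus (a k) : ℝ) : ℂ)
        / (1 + ((softplus t - softplus (a k) : ℝ) : ℂ) * q)) * r).re)
      (-(sigmoid (a k) * r.re)) (a k) := by
    have := aux_hasDerivAt_re ((hquot.mul_const r).const_sub T0)
    convert this using 1
    simp [Complex.neg_re, Complex.re_ofReal_mul]
  have hev : ∀ᶠ t in nhds (a k),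
      (1 : ℂ) + ((softplus t - softplus (a k) : ℝ) : ℂ) * q ≠ 0 :=
    hden.continuousAt.eventually_ne hden0
  have hEqv : (fun t : ℝ => (Matrix.trace (S * (Chat P K ε ω (Function.update a k t))⁻¹)).re)
      =ᶠ[nhds (a k)] (fun t : ℝ => (T0 - (((softplus t - softplus (a k) : ℝ) : ℂ)
        / (1 + ((softplus t - softplus (a k) : ℝ) : ℂ) * q)) * r).re) := by
    filter_upwards [hev] with t ht
    rw [aux_chat_update, ← hCdef, ← hvdef, aux_inv_add C hdet v _ ht,
      Matrix.mul_sub, Matrix.mul_smul, Matrix.trace_sub, Matrix.trace_smul, ← hT0, ← hrdef,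
      ← hqdef, smul_eq_mul]
  have H1 : HasDerivAt
      (fun t : ℝ => (Matrix.trace (S * (Chat P K ε ω (Function.update a k t))⁻¹)).re)
      (-(sigmoid (a k) * r.re)) (a k) := hφ.congr_of_eventuallyEq hEqv
  -- combine
  have hmat : C⁻¹ * (C - S) * C⁻¹ = C⁻¹ - C⁻¹ * S * C⁻¹ := by
    rw [Matrix.mul_sub, Matrix.nonsing_inv_mul C hdet, Matrix.sub_mul, Matrix.one_mul]
  have hrr : r = star v ⬝ᵥ ((C⁻¹ * S * C⁻¹) *ᵥ v) := by
    rw [hrdef, show S * (C⁻¹ * outer v * C⁻¹) = S * C⁻¹ * outer v * C⁻¹ by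
        simp only [Matrix.mul_assoc],
      Matrix.trace_mul_cycle (S * C⁻¹) (outer v) C⁻¹,
      show C⁻¹ * (S * C⁻¹) * outer v = (C⁻¹ * S * C⁻¹) * outer v by
        rw [← Matrix.mul_assoc],
      aux_trace_mul_outer]
  have hfinal : sigmoid (a k) * (star v ⬝ᵥ ((C⁻¹ * (C - S) * C⁻¹) *ᵥ v)).re
      = -(sigmoid (a k) * r.re) + sigmoid (a k) * q.re := by
    rw [hmat, Matrix.sub_mulVec, dotProduct_sub, Complex.sub_re, ← hqdef, ← hrr]
    ring
  have Hsum := H1.add H2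
  simp only [nll]
  rw [hfinal]
  exact Hsum
end
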